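/- A pure state |ψ⟩ = ∑_{j,k,l,m=1}^{d} T_{jklm} |j⟩|k⟩|l⟩|m⟩ of four qudits is absolutely maximally entangled (all two-party reduced density matrices equal I_{d²}/d²) if and only if the three d²×d² matrices U, U^Γ, U^R obtained from the tensor T — namely U_{(j,k),(l,m)} = T_{jklm}, (U^Γ)_{(j,k),(l,m)} = T_{jmlk}, (U^R)_{(j,k),(l,m)} = T_{jlkm} — are all proportional to unitary matrices (equivalently, (1/d)·U is 2-unitary). -/

import Mathlib

open Complex

private lemma row_unitary_iff {d : ℕ} (hd : 0 < d)
    (M : Matrix (Fin d × Fin d) (Fin d × Fin d) ℂ)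
    (hM : ∑ p, ∑ r, M p r * (starRingEnd ℂ) (M p r) = 1) :
    (∀ p q, ∑ r, M p r * (starRingEnd ℂ) (M q r) =
        if p = q then ((d : ℂ) ^ 2)⁻¹ else 0) ↔
    ∃ c : ℂ, c • M ∈ Matrix.unitaryGroup (Fin d × Fin d) ℂ := by
  have hd0 : (d : ℂ) ≠ 0 := Nat.cast_ne_zero.mpr hd.ne'
  have hd2 : ((d : ℂ) ^ 2) ≠ 0 := pow_ne_zero _ hd0
  have entry : ∀ (c : ℂ) (p q : Fin d × Fin d),
      ((c • M) * star (c • M)) p q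
        = (c * (starRingEnd ℂ) c) * ∑ r, M p r * (starRingEnd ℂ) (M q r) := by
    intro c p q
    rw [Matrix.star_eq_conjTranspose, Matrix.mul_apply, Finset.mul_sum]
    refine Finset.sum_congr rfl fun r _ => ?_
    simp only [Matrix.conjTranspose_apply, Matrix.smul_apply, smul_eq_mul, map_mul,
      Matrix.star_apply, RingHom.map_mul, Complex.star_def]
    ring
  constructor
  · intro h
    refine ⟨(d : ℂ), ?_⟩
    rw [Matrix.mem_unitaryGroup_iff]
    ext p q
    rw [entry, h p q, Matrix.one_apply]
    by_cases hpq : p = q <;> simp [hpq, Complex.conj_natCast]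
    rw [← sq]
    field_simp
  · rintro ⟨c, hc⟩
    have hc' := Matrix.mem_unitaryGroup_iff.mp hc
    have key : ∀ p q : Fin d × Fin d,
        (c * (starRingEnd ℂ) c) * (∑ r, M p r * (starRingEnd ℂ) (M q r))
          = if p = q then 1 else 0 := by
      intro p q
      rw [← entry, hc', Matrix.one_apply]
    have hcc : c * (starRingEnd ℂ) c = (d : ℂ) ^ 2 := by
      have h1 : ∑ p : Fin d × Fin d,
          (c * (starRingEnd ℂ) c) * (∑ r, M p r * (starRingEnd ℂ) (M p r))
            = ∑ p : Fin d × Fin d, ((1 : ℂ)) := by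
        refine Finset.sum_congr rfl fun p _ => ?_
        rw [key p p, if_pos rfl]
      rw [← Finset.mul_sum, hM, mul_one] at h1
      rw [h1]
      simp [Finset.card_univ, sq]
    intro p q
    have h2 := key p q
    rw [hcc] at h2
    by_cases hpq : p = q
    · rw [if_pos hpq] at h2 ⊢
      field_simp at h2 ⊢
      linear_combination h2
    · rw [if_neg hpq] at h2 ⊢
      exact (mul_eq_zero.mp h2).resolve_left hd2

private lemma col_unitary_iff {d : ℕ} (hd : 0 < d)
    (M : Matrix (Fin d × Fin d) (Fin d × Fin d) ℂ)
    (hM : ∑ p, ∑ r, M p r * (starRingEnd ℂ) (M p r) = 1) :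
    (∀ p q, ∑ r, M r p * (starRingEnd ℂ) (M r q) =
        if p = q then ((d : ℂ) ^ 2)⁻¹ else 0) ↔
    ∃ c : ℂ, c • M ∈ Matrix.unitaryGroup (Fin d × Fin d) ℂ := by
  have hd0 : (d : ℂ) ≠ 0 := Nat.cast_ne_zero.mpr hd.ne'
  have hd2 : ((d : ℂ) ^ 2) ≠ 0 := pow_ne_zero _ hd0
  have entry : ∀ (c : ℂ) (p q : Fin d × Fin d),
      (star (c • M) * (c • M)) p q
        = (c * (starRingEnd ℂ) c) * ∑ r, M r q * (starRingEnd ℂ) (M r p) := by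
    intro c p q
    rw [Matrix.star_eq_conjTranspose, Matrix.mul_apply, Finset.mul_sum]
    refine Finset.sum_congr rfl fun r _ => ?_
    simp only [Matrix.conjTranspose_apply, Matrix.smul_apply, smul_eq_mul, map_mul,
      Matrix.star_apply, RingHom.map_mul, Complex.star_def]
    ring
  constructor
  · intro h
    refine ⟨(d : ℂ), ?_⟩
    rw [Matrix.mem_unitaryGroup_iff']
    ext p q
    rw [entry, h q p, Matrix.one_apply]
    by_cases hpq : p = q
    · rw [if_pos hpq.symm, if_pos hpq, Complex.conj_natCast, ← sq]
      field_simp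
    · rw [if_neg (fun h => hpq h.symm), if_neg hpq, mul_zero]
  · rintro ⟨c, hc⟩
    have hc' := Matrix.mem_unitaryGroup_iff'.mp hc
    have key : ∀ p q : Fin d × Fin d,
        (c * (starRingEnd ℂ) c) * (∑ r, M r q * (starRingEnd ℂ) (M r p))
          = if p = q then 1 else 0 := by
      intro p q
      rw [← entry, hc', Matrix.one_apply]
    have hcc : c * (starRingEnd ℂ) c = (d : ℂ) ^ 2 := by
      have h1 : ∑ p : Fin d × Fin d,
          (c * (starRingEnd ℂ) c) * (∑ r, M r p * (starRingEnd ℂ) (M r p))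
            = ∑ p : Fin d × Fin d, ((1 : ℂ)) := by
        refine Finset.sum_congr rfl fun p _ => ?_
        rw [key p p, if_pos rfl]
      rw [← Finset.mul_sum, Finset.sum_comm, hM, mul_one] at h1
      rw [h1]
      simp [Finset.card_univ, sq]
    intro p q
    have h2 := key q p
    rw [hcc] at h2
    by_cases hpq : p = q
    · rw [if_pos hpq.symm] at h2
      rw [if_pos hpq]
      field_simp at h2 ⊢
      linear_combination h2
    · rw [if_neg (fun h' => hpq h'.symm)] at h2
      rw [if_neg hpq]
      exact (mul_eq_zero.mp h2).resolve_left hd2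
theorem stmt_19 (d : ℕ) (hd : 0 < d) (T : Fin d → Fin d → Fin d → Fin d → ℂ)
    (hnorm : ∑ j, ∑ k, ∑ l, ∑ m, ‖T j k l m‖ ^ 2 = 1) :
    -- all six two-party reduced density matrices are maximally mixed …
    ((∀ p q : Fin d × Fin d,
        (∑ l, ∑ m, T p.1 p.2 l m * (starRingEnd ℂ) (T q.1 q.2 l m)) =
          if p = q then ((d : ℂ) ^ 2)⁻¹ else 0) ∧
     (∀ p q : Fin d × Fin d,
        (∑ k, ∑ m, T p.1 k p.2 m * (starRingEnd ℂ) (T q.1 k q.2 m)) =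
          if p = q then ((d : ℂ) ^ 2)⁻¹ else 0) ∧
     (∀ p q : Fin d × Fin d,
        (∑ k, ∑ l, T p.1 k l p.2 * (starRingEnd ℂ) (T q.1 k l q.2)) =
          if p = q then ((d : ℂ) ^ 2)⁻¹ else 0) ∧
     (∀ p q : Fin d × Fin d,
        (∑ j, ∑ m, T j p.1 p.2 m * (starRingEnd ℂ) (T j q.1 q.2 m)) =
          if p = q then ((d : ℂ) ^ 2)⁻¹ else 0) ∧
     (∀ p q : Fin d × Fin d,
        (∑ j, ∑ l, T j p.1 l p.2 * (starRingEnd ℂ) (T j q.1 l q.2)) =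
          if p = q then ((d : ℂ) ^ 2)⁻¹ else 0) ∧
     (∀ p q : Fin d × Fin d,
        (∑ j, ∑ k, T j k p.1 p.2 * (starRingEnd ℂ) (T j k q.1 q.2)) =
          if p = q then ((d : ℂ) ^ 2)⁻¹ else 0)) ↔
    -- … iff `U`, `U^Γ` and `U^R` are all proportional to unitary matrices
    ((∃ c : ℂ, c • (Matrix.of fun p q : Fin d × Fin d => T p.1 p.2 q.1 q.2) ∈
        Matrix.unitaryGroup (Fin d × Fin d) ℂ) ∧
     (∃ c : ℂ, c • (Matrix.of fun p q : Fin d × Fin d => T p.1 q.2 q.1 p.2) ∈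
        Matrix.unitaryGroup (Fin d × Fin d) ℂ) ∧
     (∃ c : ℂ, c • (Matrix.of fun p q : Fin d × Fin d => T p.1 q.1 p.2 q.2) ∈
        Matrix.unitaryGroup (Fin d × Fin d) ℂ)) := by
  -- the total norm as a complex sum
  have hnormC : ∑ j, ∑ k, ∑ l, ∑ m, T j k l m * (starRingEnd ℂ) (T j k l m) = 1 := by
    have e : ∀ z : ℂ, z * (starRingEnd ℂ) z = ((‖z‖ ^ 2 : ℝ) : ℂ) := by
      intro z
      rw [Complex.mul_conj, Complex.sq_norm]
    simp only [e]
    push_cast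
    exact_mod_cast hnorm
  -- a generic reshuffling lemma for triple sums
  have tri : ∀ f : Fin d → Fin d → Fin d → ℂ,
      ∑ k, ∑ l, ∑ m, f k l m = ∑ m, ∑ l, ∑ k, f k l m := by
    intro f
    calc ∑ k, ∑ l, ∑ m, f k l m
        = ∑ k, ∑ m, ∑ l, f k l m := Finset.sum_congr rfl fun k _ => Finset.sum_comm
      _ = ∑ m, ∑ k, ∑ l, f k l m := Finset.sum_comm
      _ = ∑ m, ∑ l, ∑ k, f k l m := Finset.sum_congr rfl fun m _ => Finset.sum_comm
  set U : Matrix (Fin d × Fin d) (Fin d × Fin d) ℂ :=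
    Matrix.of fun p q : Fin d × Fin d => T p.1 p.2 q.1 q.2 with hUdef
  set UG : Matrix (Fin d × Fin d) (Fin d × Fin d) ℂ :=
    Matrix.of fun p q : Fin d × Fin d => T p.1 q.2 q.1 p.2 with hUGdef
  set UR : Matrix (Fin d × Fin d) (Fin d × Fin d) ℂ :=
    Matrix.of fun p q : Fin d × Fin d => T p.1 q.1 p.2 q.2 with hURdef
  have hU : ∑ p, ∑ r, U p r * (starRingEnd ℂ) (U p r) = 1 := by
    simp only [hUdef, Fintype.sum_prod_type, Matrix.of_apply]
    exact hnormC
  have hUR : ∑ p, ∑ r, UR p r * (starRingEnd ℂ) (UR p r) = 1 := by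
    simp only [hURdef, Fintype.sum_prod_type, Matrix.of_apply]
    have : ∀ j : Fin d, ∑ k, ∑ l, ∑ m, T j l k m * (starRingEnd ℂ) (T j l k m)
        = ∑ l, ∑ k, ∑ m, T j l k m * (starRingEnd ℂ) (T j l k m) :=
      fun j => Finset.sum_comm
    rw [Finset.sum_congr rfl fun j _ => this j]
    exact hnormC
  have hUG : ∑ p, ∑ r, UG p r * (starRingEnd ℂ) (UG p r) = 1 := by
    simp only [hUGdef, Fintype.sum_prod_type, Matrix.of_apply]
    have : ∀ j : Fin d, ∑ k, ∑ l, ∑ m, T j m l k * (starRingEnd ℂ) (T j m l k)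
        = ∑ m, ∑ l, ∑ k, T j m l k * (starRingEnd ℂ) (T j m l k) :=
      fun j => tri _
    rw [Finset.sum_congr rfl fun j _ => this j]
    exact hnormC
  have rU := row_unitary_iff hd U hU
  have cU := col_unitary_iff hd U hU
  have rUG := row_unitary_iff hd UG hUG
  have cUG := col_unitary_iff hd UG hUG
  have rUR := row_unitary_iff hd UR hUR
  have cUR := col_unitary_iff hd UR hUR
  constructor
  · rintro ⟨s1, s2, s3, s4, s5, s6⟩
    refine ⟨rU.mp ?_, rUG.mp ?_, rUR.mp ?_⟩
    · intro p q
      rw [Fintype.sum_prod_type]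
      exact s1 p q
    · intro p q
      rw [Fintype.sum_prod_type]
      simp only [hUGdef, Matrix.of_apply]
      rw [Finset.sum_comm]
      exact s3 p q
    · intro p q
      rw [Fintype.sum_prod_type]
      exact s2 p q
  · rintro ⟨e1, e2, e3⟩
    have r1 := rU.mpr e1
    have c1 := cU.mpr e1
    have r2 := rUG.mpr e2
    have c2 := cUG.mpr e2
    have r3 := rUR.mpr e3
    have c3 := cUR.mpr e3
    refine ⟨?_, ?_, ?_, ?_, ?_, ?_⟩
    · intro p q
      have := r1 p q
      rwa [Fintype.sum_prod_type] at this
    · intro p q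
      have := r3 p q
      rwa [Fintype.sum_prod_type] at this
    · intro p q
      have := r2 p q
      rw [Fintype.sum_prod_type] at this
      simp only [hUGdef, Matrix.of_apply] at this
      rw [Finset.sum_comm] at this
      exact this
    · intro p q
      have := c2 (p.2, p.1) (q.2, q.1)
      rw [Fintype.sum_prod_type] at this
      simp only [hUGdef, Matrix.of_apply] at this
      have hiff : ((p.2, p.1) = (q.2, q.1)) ↔ p = q := by
        simp [Prod.ext_iff, and_comm]
      rw [if_congr hiff rfl rfl] at this
      exact this
    · intro p q
      have := c3 p q
      rwa [Fintype.sum_prod_type] at this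
    · intro p q
      have := c1 p q
      rwa [Fintype.sum_prod_type] at this
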